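/- For the cycle C_n on n ≥ 3 vertices, γ_I(C_n ⊙ K_1) = ⌈4n/3⌉. -/

import Mathlib

open SimpleGraph Finset
open scoped Classical

/-- An Italian dominating function: values in {0,1,2}, and every vertex with
value 0 has neighbor values summing to at least 2. -/
def IsItalian {V : Type*} [Fintype V] (G : SimpleGraph V) (f : V → ℕ) : Prop :=
  (∀ v, f v ≤ 2) ∧
    ∀ v, f v = 0 → 2 ≤ ∑ u ∈ Finset.univ.filter (fun w => G.Adj v w), f u

/-- The Italian domination number: minimum weight of an Italian dominating function. -/
noncomputable def italianDomNumber {V : Type*} [Fintype V] (G : SimpleGraph V) : ℕ :=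
  sInf {w | ∃ f : V → ℕ, IsItalian G f ∧ ∑ v, f v = w}

/-- The corona `G ⊙ K₁`: attach one pendant vertex (an `inr` copy) to each vertex of `G`. -/
def coronaK1 {V : Type*} (G : SimpleGraph V) : SimpleGraph (V ⊕ V) :=
  SimpleGraph.fromRel (fun a b =>
    match a, b with
    | Sum.inl u, Sum.inl v => G.Adj u v
    | Sum.inl u, Sum.inr v => u = v
    | Sum.inr u, Sum.inl v => u = v
    | Sum.inr _, Sum.inr _ => False)

/-- The corona `G ⊙ H`: one copy of `H` per vertex of `G`, each joined to that vertex. -/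
def corona {V W : Type*} (G : SimpleGraph V) (H : SimpleGraph W) :
    SimpleGraph (V ⊕ V × W) :=
  SimpleGraph.fromRel (fun a b =>
    match a, b with
    | Sum.inl u, Sum.inl v => G.Adj u v
    | Sum.inl u, Sum.inr p => u = p.1
    | Sum.inr p, Sum.inl v => p.1 = v
    | Sum.inr p, Sum.inr q => p.1 = q.1 ∧ H.Adj p.2 q.2)

namespace ItalianCoronaAux

open Sum

variable {m : ℕ}

lemma h01 : (0 : Fin (m+3)) ≠ 1 := by simp [Fin.ext_iff]

lemma hne_add (a : Fin (m+3)) : a ≠ a + 1 := fun h => by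
  have h2 : a + 1 = a + 0 := by rw [add_zero]; exact h.symm
  exact h01 (add_left_cancel h2).symm

lemma hne_sub (a : Fin (m+3)) : a ≠ a - 1 := fun h => by
  have h2 : a - 1 + 1 = a + 1 := by rw [← h]
  rw [sub_add_cancel] at h2
  exact hne_add a h2

open Fin.CommRing in
lemma cyc_adj (i j : Fin (m+3)) :
    (cycleGraph (m+3)).Adj i j ↔ (j = i - 1 ∨ j = i + 1) := by
  rw [cycleGraph_adj (n := m+1)]
  constructor
  · rintro (h | h)
    · left; rw [eq_sub_iff_add_eq, ← h]; ring
    · right; rw [← h]; ring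
  · rintro (rfl | rfl)
    · left; ring
    · right; ring

lemma adj_inr (i : Fin (m+3)) (x : Fin (m+3) ⊕ Fin (m+3)) :
    (coronaK1 (cycleGraph (m+3))).Adj (inr i) x ↔ x = inl i := by
  cases x with
  | inl j => simp [coronaK1, SimpleGraph.fromRel_adj, eq_comm]
  | inr j => simp [coronaK1, SimpleGraph.fromRel_adj]

open Fin.CommRing in
lemma adj_inl (i : Fin (m+3)) (x : Fin (m+3) ⊕ Fin (m+3)) :
    (coronaK1 (cycleGraph (m+3))).Adj (inl i) x ↔
      (x = inl (i-1) ∨ x = inl (i+1) ∨ x = inr i) := by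
  cases x with
  | inl j =>
    simp only [coronaK1, SimpleGraph.fromRel_adj, inl.injEq, reduceCtorEq, or_false,
      ne_eq, adj_comm (G := cycleGraph (m+3)) j i, or_self, cyc_adj]
    constructor
    · rintro ⟨hne, (h | h) | (h | h)⟩
      · exact Or.inl h
      · exact Or.inr h
      · right; rw [h]; ring
      · left; rw [h]; ring
    · rintro (rfl | rfl)
      · exact ⟨fun h => hne_sub i h, Or.inl (Or.inl rfl)⟩
      · exact ⟨fun h => hne_add i h, Or.inl (Or.inr rfl)⟩
  | inr j => simp [coronaK1, SimpleGraph.fromRel_adj, eq_comm]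

lemma sum_nbr_inr (i : Fin (m+3)) (f : Fin (m+3) ⊕ Fin (m+3) → ℕ) :
    ∑ u ∈ Finset.univ.filter (fun w => (coronaK1 (cycleGraph (m+3))).Adj (inr i) w), f u
      = f (inl i) := by
  have : (Finset.univ.filter (fun w => (coronaK1 (cycleGraph (m+3))).Adj (inr i) w))
      = {inl i} := by
    ext x; simp [adj_inr]
  rw [this, Finset.sum_singleton]

lemma hne2 (i : Fin (m+3)) : (i - 1 : Fin (m+3)) ≠ i + 1 := by
  intro h
  have h2 := congrArg (· + 1) h
  simp only [sub_add_cancel] at h2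
  have h0 : (0 : Fin (m+3)) = 1 + 1 :=
    add_left_cancel (show i + 0 = i + (1+1) by rw [add_zero, ← add_assoc]; exact h2)
  have h3 := congrArg Fin.val h0
  rw [Fin.add_def] at h3
  simp only [Fin.val_one, Fin.val_zero] at h3
  rw [Nat.mod_eq_of_lt (by omega)] at h3
  omega

lemma sum_nbr_inl (i : Fin (m+3)) (f : Fin (m+3) ⊕ Fin (m+3) → ℕ) :
    ∑ u ∈ Finset.univ.filter (fun w => (coronaK1 (cycleGraph (m+3))).Adj (inl i) w), f u
      = f (inl (i-1)) + f (inl (i+1)) + f (inr i) := by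
  have : (Finset.univ.filter (fun w => (coronaK1 (cycleGraph (m+3))).Adj (inl i) w))
      = {inl (i-1), inl (i+1), inr i} := by
    ext x; simp [adj_inl]
  rw [this]
  rw [Finset.sum_insert (by simp [hne2 i]), Finset.sum_insert (by simp), Finset.sum_singleton]
  ring

lemma lower (f : Fin (m+3) ⊕ Fin (m+3) → ℕ)
    (hf : IsItalian (coronaK1 (cycleGraph (m+3))) f) :
    4 * (m+3) ≤ 3 * ∑ v, f v := by
  set w : Fin (m+3) → ℕ := fun i => f (inl i) + f (inr i) with hw
  have hone : ∀ j, w j = 1 → f (inl j) = 0 ∧ f (inr j) = 1 := by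
    intro j hj
    rcases Nat.eq_zero_or_pos (f (inr j)) with h | h
    · have h2 := hf.2 (inr j) h
      rw [sum_nbr_inr] at h2
      simp only [hw] at hj
      omega
    · simp only [hw] at hj; omega
  have hpos : ∀ i, 1 ≤ w i := by
    intro i
    by_contra h
    push_neg at h
    have h0 : f (inl i) = 0 ∧ f (inr i) = 0 := by simp only [hw] at h ⊢; omega
    have h2 := hf.2 (inr i) h0.2
    rw [sum_nbr_inr, h0.1] at h2
    omega
  have hkey : ∀ i, 4 ≤ w (i-1) + w i + w (i+1) := by
    intro i
    by_contra h
    push_neg at h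
    have ha := hpos (i-1); have hb := hpos i; have hc := hpos (i+1)
    have e1 := hone _ (by omega : w (i-1) = 1)
    have e2 := hone _ (by omega : w i = 1)
    have e3 := hone _ (by omega : w (i+1) = 1)
    have h2 := hf.2 (inl i) e2.1
    rw [sum_nbr_inl, e1.1, e3.1, e2.2] at h2
    omega
  have e1 : ∑ i, w (i+1) = ∑ i, w i :=
    Fintype.sum_equiv (Equiv.addRight 1) _ _ (fun x => rfl)
  have e2 : ∑ i, w (i-1) = ∑ i, w i :=
    Fintype.sum_equiv (Equiv.subRight 1) _ _ (fun x => rfl)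
  have key2 : ∑ i, (w (i-1) + w i + w (i+1)) = 3 * ∑ i, w i := by
    rw [Finset.sum_add_distrib, Finset.sum_add_distrib, e1, e2]; ring
  have hge : 4 * (m+3) ≤ ∑ i, (w (i-1) + w i + w (i+1)) := by
    calc 4 * (m+3) = ∑ _i : Fin (m+3), 4 := by
          rw [Finset.sum_const, Finset.card_univ, Fintype.card_fin]; ring
      _ ≤ _ := Finset.sum_le_sum (fun i _ => hkey i)
  have hsum : ∑ v, f v = ∑ i, w i := by
    rw [Fintype.sum_sum_type, ← Finset.sum_add_distrib]
  omega

/-- The upper-bound construction. -/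
def ubF (n : ℕ) : Fin n ⊕ Fin n → ℕ
  | Sum.inl i => if i.val % 3 = 0 then (if i.val = n - 1 then 1 else 2) else 0
  | Sum.inr i => if i.val % 3 = 0 then (if i.val = n - 1 then 1 else 0) else 1

lemma ubF_pos_of_mod (j : Fin (m+3)) (hj : j.val % 3 = 0) : 1 ≤ ubF (m+3) (inl j) := by
  simp only [ubF, hj, if_true]
  split_ifs <;> omega

lemma ubF_italian : IsItalian (coronaK1 (cycleGraph (m+3))) (ubF (m+3)) := by
  constructor
  · rintro (i | i) <;> simp only [ubF] <;> split_ifs <;> omega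
  · rintro (i | i) h
    · -- cycle vertex with value 0: i.val % 3 ≠ 0
      have hmod : ¬ (i.val % 3 = 0) := by
        intro hm
        simp only [ubF, hm, if_true] at h
        split_ifs at h <;> omega
      rw [sum_nbr_inl]
      have hrv : ubF (m+3) (inr i) = 1 := by simp [ubF, hmod]
      rcases (by omega : i.val % 3 = 0 ∨ i.val % 3 = 1 ∨ i.val % 3 = 2) with h0 | h1 | h2
      · exact absurd h0 hmod
      · -- predecessor has value ≥ 1
        have hi0 : i ≠ 0 := by
          intro h'; rw [h'] at h1; simp at h1
        have hv : (i - 1).val = i.val - 1 := by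
          rw [Fin.coe_sub_one, if_neg hi0]
        have : 1 ≤ ubF (m+3) (inl (i-1)) := ubF_pos_of_mod _ (by omega)
        omega
      · -- successor has value ≥ 1
        have hv : (i + 1).val = if i = Fin.last (m+2) then 0 else i.val + 1 :=
          Fin.val_add_one i
        have : 1 ≤ ubF (m+3) (inl (i+1)) := by
          apply ubF_pos_of_mod
          split_ifs at hv <;> omega
        omega
    · -- pendant with value 0: i.val % 3 = 0 and i.val ≠ m+2
      have hc : i.val % 3 = 0 ∧ ¬ i.val = m + 3 - 1 := by
        by_contra h'
        simp only [ubF] at h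
        split_ifs at h <;> simp_all
      rw [sum_nbr_inr]
      simp only [ubF, hc.1, if_true, if_neg hc.2]
      omega

lemma sum_range_aux : ∀ n : ℕ,
    (∑ i ∈ Finset.range n, (if i % 3 = 0 then 2 else 1)) = n + (n+2)/3
  | 0 => by simp
  | n+1 => by
      rw [Finset.sum_range_succ, sum_range_aux n]
      split_ifs <;> omega

lemma sum_ubF : ∑ v, ubF (m+3) v = (4*(m+3)+2)/3 := by
  rw [Fintype.sum_sum_type, ← Finset.sum_add_distrib]
  have hterm : ∀ i : Fin (m+3), ubF (m+3) (inl i) + ubF (m+3) (inr i)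
      = if i.val % 3 = 0 then 2 else 1 := by
    intro i
    simp only [ubF]
    split_ifs <;> omega
  rw [Finset.sum_congr rfl (fun i _ => hterm i)]
  rw [Fin.sum_univ_eq_sum_range (fun i => if i % 3 = 0 then 2 else 1) (m+3)]
  rw [sum_range_aux (m+3)]
  omega

end ItalianCoronaAux

theorem italian_coronaK1_cycle (n : ℕ) (hn : 3 ≤ n) :
    italianDomNumber (coronaK1 (SimpleGraph.cycleGraph n)) = (4 * n + 2) / 3 := by
  obtain ⟨m, rfl⟩ : ∃ m, n = m + 3 := ⟨n - 3, by omega⟩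
  have hmem : (4 * (m+3) + 2) / 3 ∈
      {w | ∃ f : Fin (m+3) ⊕ Fin (m+3) → ℕ,
        IsItalian (coronaK1 (SimpleGraph.cycleGraph (m+3))) f ∧ ∑ v, f v = w} :=
    ⟨ItalianCoronaAux.ubF (m+3), ItalianCoronaAux.ubF_italian, ItalianCoronaAux.sum_ubF⟩
  refine le_antisymm (Nat.sInf_le hmem) (le_csInf ⟨_, hmem⟩ ?_)
  rintro w ⟨f, hf, rfl⟩
  have := ItalianCoronaAux.lower f hf
  omega
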